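/- (The identification quadratic, equation (polinomio), underlying step 2 of the estimation algorithm.) Fix an index i and set a₂ := eᵢᵀ(Σ₁ − Σ₁ᵀ)wᵢ. Define q(c) := g′(c)·h(c) − g(c)·h′(c) − a₂·h(c). Then: (a) q is a polynomial function of c of degree at most 2 (the cubic terms of g′h − g h′ cancel, and (eᵢ − c wᵢ)ᵀ(Σ₁ − Σ₁ᵀ)wᵢ = a₂ for every c because wᵢᵀ(Σ₁ − Σ₁ᵀ)wᵢ = 0); and (b) if (λ₀ᵢ*, λ₁ᵢ*) ∈ ℝ² satisfies the Yule–Walker identification system at location i, then q(λ₀ᵢ*) = 0. -/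

import Mathlib

open Matrix

private lemma quad_deriv (b0 b1 b2 c : ℝ) :
    deriv (fun x : ℝ => b0 - b1*x + b2*x^2) c = -b1 + 2*b2*c := by
  have h1 : HasDerivAt (fun x : ℝ => b0 - b1*x) (0 - b1*1) c :=
    (hasDerivAt_const c b0).sub ((hasDerivAt_id c).const_mul b1)
  have h2 : HasDerivAt (fun x : ℝ => b2*x^2) (b2*((2:ℕ)*c^(2-1))) c :=
    (hasDerivAt_pow 2 c).const_mul b2
  have h := (h1.add h2).deriv
  rw [show (fun x : ℝ => b0 - b1*x + b2*x^2) = ((fun x : ℝ => b0 - b1*x) + fun x => b2*x^2) from rfl, h]; push_cast; ring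

private lemma dot_transpose {n : ℕ} (S : Matrix (Fin n) (Fin n) ℝ) (x y : Fin n → ℝ) :
    x ⬝ᵥ S *ᵥ y = y ⬝ᵥ Sᵀ *ᵥ x := by
  rw [Matrix.dotProduct_mulVec, ← Matrix.mulVec_transpose, dotProduct_comm]

/-- The identification quadratic (equation (polinomio)): with
`a₂ = eᵢᵀ(Σ₁ − Σ₁ᵀ)wᵢ` and `q(c) = g′(c)h(c) − g(c)h′(c) − a₂ h(c)`, (a) `q` is a
polynomial of degree at most 2, and (b) any solution `(λ₀ᵢ*, λ₁ᵢ*)` of the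
Yule–Walker identification system at location `i` satisfies `q(λ₀ᵢ*) = 0`. -/
theorem stmt_6 (p : ℕ) (hp : 0 < p)
    (W : Matrix (Fin p) (Fin p) ℝ) (hW : ∀ i, W i i = 0)
    (l₀ l₁ : Fin p → ℝ)
    (M : Matrix (Fin p) (Fin p) ℝ) (hM : M = 1 - Matrix.diagonal l₀ * W)
    (hMinv : IsUnit M)
    (A : Matrix (Fin p) (Fin p) ℝ) (hA : A = M⁻¹ * Matrix.diagonal l₁ * M)
    (Sig0 : Matrix (Fin p) (Fin p) ℝ) (hSig0 : Sig0.PosDef)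
    (Sig1 : Matrix (Fin p) (Fin p) ℝ) (hSig1 : Sig1 = A * Sig0)
    (i : Fin p)
    (g h : ℝ → ℝ)
    (hg : ∀ c : ℝ, g c = (Pi.single i 1 - c • W i) ⬝ᵥ
      Sig1.mulVec (Pi.single i 1 - c • W i))
    (hh : ∀ c : ℝ, h c = (Pi.single i 1 - c • W i) ⬝ᵥ
      Sig0.mulVec (Pi.single i 1 - c • W i))
    (a₂ : ℝ) (ha₂ : a₂ = (Pi.single i 1 : Fin p → ℝ) ⬝ᵥ (Sig1 - Sig1ᵀ).mulVec (W i))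
    (q : ℝ → ℝ)
    (hq : ∀ c : ℝ, q c = deriv g c * h c - g c * deriv h c - a₂ * h c) :
    (∃ t₀ t₁ t₂ : ℝ, ∀ c : ℝ, q c = t₀ + t₁ * c + t₂ * c ^ 2) ∧
      (∀ lstar0 lstar1 : ℝ,
        Matrix.vecMul (Pi.single i 1 - lstar0 • W i) Sig1
          = lstar1 • Matrix.vecMul (Pi.single i 1 - lstar0 • W i) Sig0 →
        q lstar0 = 0) := by
  set e : Fin p → ℝ := Pi.single i 1 with he
  set w : Fin p → ℝ := W i with hw
  -- scalar coefficients
  set b0 : ℝ := e ⬝ᵥ Sig1 *ᵥ e with hb0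
  set b1 : ℝ := w ⬝ᵥ Sig1 *ᵥ e + e ⬝ᵥ Sig1 *ᵥ w with hb1
  set b2 : ℝ := w ⬝ᵥ Sig1 *ᵥ w with hb2
  set d0 : ℝ := e ⬝ᵥ Sig0 *ᵥ e with hd0
  set d1 : ℝ := w ⬝ᵥ Sig0 *ᵥ e + e ⬝ᵥ Sig0 *ᵥ w with hd1
  set d2 : ℝ := w ⬝ᵥ Sig0 *ᵥ w with hd2
  have hgpoly : ∀ c : ℝ, g c = b0 - b1*c + b2*c^2 := by
    intro c
    rw [hg c, hb0, hb1, hb2]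
    simp only [Matrix.mulVec_sub, Matrix.mulVec_smul, dotProduct_sub,
      sub_dotProduct, dotProduct_smul, smul_dotProduct,
      smul_eq_mul]
    ring
  have hhpoly : ∀ c : ℝ, h c = d0 - d1*c + d2*c^2 := by
    intro c
    rw [hh c, hd0, hd1, hd2]
    simp only [Matrix.mulVec_sub, Matrix.mulVec_smul, dotProduct_sub,
      sub_dotProduct, dotProduct_smul, smul_dotProduct,
      smul_eq_mul]
    ring
  have hgfun : g = fun c : ℝ => b0 - b1*c + b2*c^2 := funext hgpoly
  have hhfun : h = fun c : ℝ => d0 - d1*c + d2*c^2 := funext hhpoly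
  have hgderiv : ∀ c : ℝ, deriv g c = -b1 + 2*b2*c := by
    intro c; rw [hgfun]; exact quad_deriv b0 b1 b2 c
  have hhderiv : ∀ c : ℝ, deriv h c = -d1 + 2*d2*c := by
    intro c; rw [hhfun]; exact quad_deriv d0 d1 d2 c
  constructor
  · refine ⟨b0*d1 - b1*d0 - a₂*d0, 2*b2*d0 - 2*b0*d2 + a₂*d1,
      b1*d2 - b2*d1 - a₂*d2, fun c => ?_⟩
    rw [hq c, hgderiv c, hhderiv c, hgpoly c, hhpoly c]
    ring
  · intro lstar0 lstar1 hyp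
    set u : Fin p → ℝ := e - lstar0 • w with hu
    -- consequences of the Yule-Walker system
    have hgval : g lstar0 = lstar1 * (u ⬝ᵥ Sig0 *ᵥ u) := by
      rw [hg lstar0]
      rw [Matrix.dotProduct_mulVec, hyp, smul_dotProduct,
        ← Matrix.dotProduct_mulVec]
      rfl
    have huw1 : u ⬝ᵥ Sig1 *ᵥ w = lstar1 * (u ⬝ᵥ Sig0 *ᵥ w) := by
      rw [Matrix.dotProduct_mulVec, hyp, smul_dotProduct,
        ← Matrix.dotProduct_mulVec]
      rfl
    -- skew part
    have hskew : w ⬝ᵥ (Sig1 - Sig1ᵀ) *ᵥ w = 0 := by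
      rw [Matrix.sub_mulVec, dotProduct_sub, dot_transpose Sig1 w w, sub_self]
    have ha₂u : u ⬝ᵥ (Sig1 - Sig1ᵀ) *ᵥ w = a₂ := by
      rw [hu, sub_dotProduct, smul_dotProduct, hskew, ha₂]
      simp [he, hw]
    have hwu1 : w ⬝ᵥ Sig1 *ᵥ u = u ⬝ᵥ Sig1 *ᵥ w - a₂ := by
      rw [dot_transpose Sig1 w u, ← ha₂u, Matrix.sub_mulVec, dotProduct_sub]
      ring
    have hSig0symm : Sig0ᵀ = Sig0 := by
      have := hSig0.isHermitian
      rwa [Matrix.IsHermitian, Matrix.conjTranspose_eq_transpose_of_trivial] at this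
    have hsym0 : w ⬝ᵥ Sig0 *ᵥ u = u ⬝ᵥ Sig0 *ᵥ w := by
      rw [dot_transpose Sig0 w u, hSig0symm]
    have hhval : h lstar0 = u ⬝ᵥ Sig0 *ᵥ u := by rw [hh lstar0]
    -- derivatives at lstar0 in u-form
    have hgd : deriv g lstar0 = -(w ⬝ᵥ Sig1 *ᵥ u) - u ⬝ᵥ Sig1 *ᵥ w := by
      rw [hgderiv lstar0, hb1, hb2, hu]
      simp only [Matrix.mulVec_sub, Matrix.mulVec_smul, dotProduct_sub,
        sub_dotProduct, dotProduct_smul, smul_dotProduct,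
        smul_eq_mul]
      ring
    have hhd : deriv h lstar0 = -(w ⬝ᵥ Sig0 *ᵥ u) - u ⬝ᵥ Sig0 *ᵥ w := by
      rw [hhderiv lstar0, hd1, hd2, hu]
      simp only [Matrix.mulVec_sub, Matrix.mulVec_smul, dotProduct_sub,
        sub_dotProduct, dotProduct_smul, smul_dotProduct,
        smul_eq_mul]
      ring
    rw [hq lstar0, hgd, hhd, hgval, hhval, hwu1, huw1, hsym0]
    ring
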